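/- Let R be a real skew-symmetric d×d matrix, and take Q = I and B = -I + R. Then Q_t = (1/2)(1-e^{-2t}) I for every t ∈ (0,∞], and the kernel h_t(x,y) = det(Q_∞ Q_t^{-1})^{1/2} exp( -(1/2)[ ⟨Q_t^{-1}(e^{tB}x - y), e^{tB}x - y⟩ - ⟨Q_∞^{-1}y, y⟩ ] ) equals h_t^0(e^{tR}x, y) for all x,y ∈ ℝ^d and t > 0. -/

import Mathlib

open MeasureTheory Matrix

noncomputable section

/-- `nsq x = |x|²`, the squared Euclidean norm on `ℝ^d`. -/
def nsq {d : ℕ} (x : Fin d → ℝ) : ℝ := ∑ i, x i ^ 2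

/-- `Q_t = ∫_0^t e^{sB} Q e^{sBᵀ} ds` (defined entrywise). -/
def Qt {d : ℕ} (Q B : Matrix (Fin d) (Fin d) ℝ) (t : ℝ) : Matrix (Fin d) (Fin d) ℝ :=
  Matrix.of fun i j =>
    ∫ s in Set.Ioc (0 : ℝ) t,
      (NormedSpace.exp (s • B) * Q * NormedSpace.exp (s • Bᵀ)) i j

/-- `Q_∞ = ∫_0^∞ e^{sB} Q e^{sBᵀ} ds` (defined entrywise). -/
def Qinf {d : ℕ} (Q B : Matrix (Fin d) (Fin d) ℝ) : Matrix (Fin d) (Fin d) ℝ :=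
  Matrix.of fun i j =>
    ∫ s in Set.Ioi (0 : ℝ),
      (NormedSpace.exp (s • B) * Q * NormedSpace.exp (s • Bᵀ)) i j

/-- The kernel `h_t(x,y)` of the Ornstein-Uhlenbeck semigroup with respect to `γ_∞`:
`h_t(x,y) = det(Q_∞ Q_t⁻¹)^{1/2} exp(-(1/2)[⟨Q_t⁻¹(e^{tB}x - y), e^{tB}x - y⟩ - ⟨Q_∞⁻¹y, y⟩])`. -/
def ouKer {d : ℕ} (Q B : Matrix (Fin d) (Fin d) ℝ) (t : ℝ) (x y : Fin d → ℝ) : ℝ :=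
  (Qinf Q B * (Qt Q B t)⁻¹).det ^ ((1 : ℝ) / 2) *
    Real.exp (-(1 / 2) *
      ((Qt Q B t)⁻¹.mulVec ((NormedSpace.exp (t • B)).mulVec x - y) ⬝ᵥ
          ((NormedSpace.exp (t • B)).mulVec x - y) -
        (Qinf Q B)⁻¹.mulVec y ⬝ᵥ y))

/-- The Mehler kernel `h_t^0(x,y)` of the symmetric Ornstein-Uhlenbeck semigroup
generated by `(1/2)Δ - ⟨x,∇⟩`. -/
def mehler (d : ℕ) (t : ℝ) (x y : Fin d → ℝ) : ℝ :=
  (1 - Real.exp (-2 * t)) ^ (-(d : ℝ) / 2) *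
    Real.exp ((1 / 2) *
      (nsq (x + y) / (Real.exp t + 1) - nsq (x - y) / (Real.exp t - 1)))

end

section Aux

theorem exp_smul_one' {d : ℕ} (r : ℝ) :
    NormedSpace.exp (r • (1 : Matrix (Fin d) (Fin d) ℝ)) = Real.exp r • 1 := by
  have h : r • (1 : Matrix (Fin d) (Fin d) ℝ) = Matrix.diagonal (fun _ => r) := by
    ext i j
    rcases eq_or_ne i j with rfl | hij
    · simp
    · simp [Matrix.one_apply_ne hij, Matrix.diagonal_apply_ne _ hij]
  rw [h, Matrix.exp_diagonal]
  ext i j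
  rcases eq_or_ne i j with rfl | hij
  · simp [Pi.exp_def, ← Real.exp_eq_exp_ℝ]
  · simp [Matrix.diagonal_apply_ne _ hij, Matrix.one_apply_ne hij]

theorem exp_smul_neg_one_add {d : ℕ} (s : ℝ) (M : Matrix (Fin d) (Fin d) ℝ) :
    NormedSpace.exp (s • ((-1 : Matrix (Fin d) (Fin d) ℝ) + M))
      = Real.exp (-s) • NormedSpace.exp (s • M) := by
  have h1 : s • ((-1 : Matrix (Fin d) (Fin d) ℝ) + M)
      = (-s) • (1 : Matrix (Fin d) (Fin d) ℝ) + s • M := by module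
  have hc : Commute ((-s) • (1 : Matrix (Fin d) (Fin d) ℝ)) (s • M) := by
    unfold Commute SemiconjBy; simp [Matrix.smul_mul, Matrix.mul_smul]
  have h2 := Matrix.exp_add_of_commute
    ((-s) • (1 : Matrix (Fin d) (Fin d) ℝ)) (s • M) hc
  rw [h1, h2, exp_smul_one', Matrix.smul_mul, Matrix.one_mul]

theorem exp_prod {d : ℕ} {R : Matrix (Fin d) (Fin d) ℝ} (hR : Rᵀ = -R) (s : ℝ) :
    NormedSpace.exp (s • ((-1 : Matrix (Fin d) (Fin d) ℝ) + R)) * 1 *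
      NormedSpace.exp (s • ((-1 : Matrix (Fin d) (Fin d) ℝ) + R)ᵀ)
      = Real.exp (-2 * s) • 1 := by
  have ht : ((-1 : Matrix (Fin d) (Fin d) ℝ) + R)ᵀ = -1 + (-R) := by
    rw [Matrix.transpose_add, Matrix.transpose_neg, Matrix.transpose_one, hR]
  have h3 := Matrix.exp_add_of_commute (s • R) ((-s) • R)
    (((Commute.refl R).smul_left s).smul_right (-s))
  have h4 : s • R + (-s) • R = 0 := by module
  rw [h4, NormedSpace.exp_zero] at h3
  rw [ht, exp_smul_neg_one_add, exp_smul_neg_one_add, Matrix.mul_one, Matrix.smul_mul,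
    Matrix.mul_smul, smul_smul, ← Real.exp_add, smul_neg, ← neg_smul, ← h3]
  ring_nf

theorem int_Ioc (t : ℝ) (ht : 0 < t) :
    ∫ s in Set.Ioc (0:ℝ) t, Real.exp (-2*s) = (1 - Real.exp (-2*t)) / 2 := by
  rw [← intervalIntegral.integral_of_le ht.le]
  have h := intervalIntegral.integral_comp_mul_left (a := (0:ℝ)) (b := t)
    Real.exp (c := -2) (by norm_num)
  rw [h, integral_exp]
  norm_num
  ring

theorem int_Ioi :
    ∫ s in Set.Ioi (0:ℝ), Real.exp (-2*s) = 1 / 2 := by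
  have h := MeasureTheory.integral_comp_mul_left_Ioi (fun x => Real.exp (-x)) 0
    (b := 2) (by norm_num)
  simp only [mul_zero, neg_mul] at h ⊢
  rw [h, integral_exp_neg_Ioi]
  norm_num

theorem Qt_eq {d : ℕ} {R : Matrix (Fin d) (Fin d) ℝ} (hR : Rᵀ = -R) (t : ℝ) (ht : 0 < t) :
    Qt 1 (-1 + R) t = ((1 - Real.exp (-2 * t)) / 2) • (1 : Matrix (Fin d) (Fin d) ℝ) := by
  ext i j
  simp only [Qt, Matrix.of_apply, exp_prod hR, Matrix.smul_apply, smul_eq_mul]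
  rw [MeasureTheory.integral_mul_const, int_Ioc t ht]

theorem Qinf_eq {d : ℕ} {R : Matrix (Fin d) (Fin d) ℝ} (hR : Rᵀ = -R) :
    Qinf 1 (-1 + R) = ((1 : ℝ) / 2) • (1 : Matrix (Fin d) (Fin d) ℝ) := by
  ext i j
  simp only [Qinf, Matrix.of_apply, exp_prod hR, Matrix.smul_apply, smul_eq_mul]
  rw [MeasureTheory.integral_mul_const, int_Ioi]

theorem nsq_eq_dot {d : ℕ} (x : Fin d → ℝ) : nsq x = x ⬝ᵥ x := by
  simp [nsq, dotProduct, sq]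

end Aux

/-- Let `R` be a real skew-symmetric `d×d` matrix, `Q = I` and
`B = -I + R`. Then `Q_t = (1/2)(1-e^{-2t}) I` for every `t ∈ (0,∞]` (with
`Q_∞ = (1/2) I`), and the kernel `h_t(x,y)` equals `h_t^0(e^{tR}x, y)` for all
`x, y ∈ ℝ^d` and `t > 0`. -/
theorem kernel_of_skew_drift (d : ℕ) (hd : 1 ≤ d)
    (R : Matrix (Fin d) (Fin d) ℝ) (hR : Rᵀ = -R) :
    (∀ t : ℝ, 0 < t →
        Qt 1 (-1 + R) t = ((1 - Real.exp (-2 * t)) / 2) • (1 : Matrix (Fin d) (Fin d) ℝ)) ∧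
      Qinf 1 (-1 + R) = ((1 : ℝ) / 2) • (1 : Matrix (Fin d) (Fin d) ℝ) ∧
      ∀ t : ℝ, 0 < t → ∀ x y : Fin d → ℝ,
        ouKer 1 (-1 + R) t x y =
          mehler d t ((NormedSpace.exp (t • R)).mulVec x) y := by
  refine ⟨fun t ht => Qt_eq hR t ht, Qinf_eq hR, fun t ht x y => ?_⟩
  set c : ℝ := 1 - Real.exp (-2 * t) with hcdef
  have hE1 : (1:ℝ) < Real.exp t := by
    have := Real.exp_lt_exp.mpr ht
    simpa using this
  have hc : 0 < c := by
    have : Real.exp (-2 * t) < 1 := by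
      have := Real.exp_lt_exp.mpr (show -2*t < 0 by linarith)
      simpa using this
    simp only [hcdef]; linarith
  have hinvt : (((c / 2) • (1 : Matrix (Fin d) (Fin d) ℝ)))⁻¹ = (2 / c) • 1 := by
    apply Matrix.inv_eq_right_inv
    rw [Matrix.smul_mul, Matrix.mul_smul, Matrix.one_mul, smul_smul,
      show c / 2 * (2 / c) = 1 by field_simp]
    simp
  have hinvinf : ((((1:ℝ) / 2) • (1 : Matrix (Fin d) (Fin d) ℝ)))⁻¹ = (2 : ℝ) • 1 := by
    apply Matrix.inv_eq_right_inv
    rw [Matrix.smul_mul, Matrix.mul_smul, Matrix.one_mul, smul_smul]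
    norm_num
  simp only [ouKer]
  rw [Qt_eq hR t ht, Qinf_eq hR, hinvt, hinvinf]
  have hdet : ((((1:ℝ) / 2) • (1 : Matrix (Fin d) (Fin d) ℝ)) * ((2 / c) • (1 : Matrix (Fin d) (Fin d) ℝ))).det
      = (1/c)^d := by
    rw [Matrix.smul_mul, Matrix.mul_smul, Matrix.one_mul, smul_smul, Matrix.det_smul,
      Matrix.det_one, Fintype.card_fin]
    rw [show (1:ℝ)/2 * (2/c) = 1/c by field_simp]
    ring
  rw [hdet]
  have hpow : ((1/c : ℝ)^d) ^ ((1:ℝ)/2) = c ^ (-(d:ℝ)/2) := by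
    rw [one_div, inv_pow, ← Real.rpow_natCast c d, ← Real.rpow_neg hc.le,
      ← Real.rpow_mul hc.le]
    congr 1
    ring
  simp only [mehler]
  rw [hpow, nsq_eq_dot, nsq_eq_dot]
  congr 1
  congr 1
  set u := (NormedSpace.exp (t • R)).mulVec x with hu
  rw [exp_smul_neg_one_add]
  simp only [Matrix.smul_mulVec, Matrix.one_mulVec]
  rw [← hu]
  simp only [sub_dotProduct, dotProduct_sub, add_dotProduct, dotProduct_add,
    smul_dotProduct, dotProduct_smul, smul_eq_mul]
  rw [dotProduct_comm y u]
  set E := Real.exp t with hEdef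
  have hE0 : E ≠ 0 := by positivity
  have hEm : E - 1 ≠ 0 := by intro h; nlinarith
  have hEp : E + 1 ≠ 0 := by positivity
  have hcne : c ≠ 0 := hc.ne'
  have he : Real.exp (-t) = E⁻¹ := by rw [hEdef, Real.exp_neg]
  have he2 : Real.exp (-2*t) = (E*E)⁻¹ := by
    rw [show -2*t = -(t+t) by ring, Real.exp_neg, Real.exp_add, hEdef]
  have hcE : c = 1 - (E*E)⁻¹ := by rw [hcdef, he2]
  rw [he, hcE]
  have hEE : E * E - 1 ≠ 0 := by
    intro h; nlinarith
  have hEE2 : -1 + E ^ 2 ≠ 0 := by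
    intro h; nlinarith
  field_simp
  ring_nf
  field_simp
  ring
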